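/- Let G be a connected r-regular simple graph with n vertices and m edges, and let L_RT denote the Laplacian matrix of RT(G) written in block form. Then for every real number μ with μ ≠ 1 and μ ≠ 3, det(μ·I_{m+3n} − L_RT) = (μ−1)^n · (μ−3)^n · det S, where S is the (m+n)×(m+n) block matrix S = [[(μ−2)I_m, Bᵀ], [B, (μ−r−2−2/(μ−1))I_n − L(G)]]. -/

import Mathlib

open Matrix SimpleGraph

/-- The Laplacian matrix of `RT(G)` in block form, given the vertex–edge incidence
matrix `B` of an `r`-regular graph `G` and its Laplacian matrix `L`.  The index type is
(edge-vertices of `G`) ⊕ (original vertices of `G`) ⊕ (pairs of new vertices). -/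
def LRTMatrix {n m : ℕ} (r : ℕ) (B : Matrix (Fin n) (Fin m) ℝ)
    (L : Matrix (Fin n) (Fin n) ℝ) :
    Matrix (Fin m ⊕ Fin n ⊕ Fin n × Fin 2) (Fin m ⊕ Fin n ⊕ Fin n × Fin 2) ℝ :=
  fun i j =>
    match i, j with
    | Sum.inl a, Sum.inl b => if a = b then 2 else 0
    | Sum.inl a, Sum.inr (Sum.inl v) => -(B v a)
    | Sum.inl _, Sum.inr (Sum.inr _) => 0
    | Sum.inr (Sum.inl v), Sum.inl a => -(B v a)
    | Sum.inr (Sum.inl v), Sum.inr (Sum.inl w) => L v w + (if v = w then (r : ℝ) + 2 else 0)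
    | Sum.inr (Sum.inl v), Sum.inr (Sum.inr (w, _)) => if v = w then -1 else 0
    | Sum.inr (Sum.inr _), Sum.inl _ => 0
    | Sum.inr (Sum.inr (w, _)), Sum.inr (Sum.inl v) => if w = v then -1 else 0
    | Sum.inr (Sum.inr (w, k)), Sum.inr (Sum.inr (w', k')) =>
        if w = w' then (if k = k' then 2 else -1) else 0


open Kronecker in
theorem laplacian_polynomial_RT_schur_step {n m : ℕ} (r : ℕ)
    (G : SimpleGraph (Fin n)) [DecidableRel G.Adj]
    (hconn : G.Connected) (hreg : G.IsRegularOfDegree r)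
    (φ : Fin m ≃ G.edgeSet) (B : Matrix (Fin n) (Fin m) ℝ)
    (hB : ∀ (v : Fin n) (j : Fin m), B v j = if v ∈ (φ j : Sym2 (Fin n)) then 1 else 0)
    (μ : ℝ) (h1 : μ ≠ 1) (h3 : μ ≠ 3) :
    (μ • (1 : Matrix (Fin m ⊕ Fin n ⊕ Fin n × Fin 2) (Fin m ⊕ Fin n ⊕ Fin n × Fin 2) ℝ)
        - LRTMatrix r B (G.lapMatrix ℝ)).det
      = (μ - 1) ^ n * (μ - 3) ^ n *
        (Matrix.fromBlocks
            ((μ - 2) • (1 : Matrix (Fin m) (Fin m) ℝ)) Bᵀ B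
            (((μ - (r : ℝ) - 2 - 2 / (μ - 1)) • (1 : Matrix (Fin n) (Fin n) ℝ))
              - G.lapMatrix ℝ)).det := by
  have h1' : μ - 1 ≠ 0 := sub_ne_zero.2 h1
  have h3' : μ - 3 ≠ 0 := sub_ne_zero.2 h3
  set d : ℝ := (μ - 1) * (μ - 3) with hd
  have hd0 : d ≠ 0 := mul_ne_zero h1' h3'
  set K : Matrix (Fin 2) (Fin 2) ℝ := !![μ-2, 1; 1, μ-2] with hK
  set K' : Matrix (Fin 2) (Fin 2) ℝ := !![(μ-2)/d, -(1/d); -(1/d), (μ-2)/d] with hK'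
  have hKK' : K * K' = 1 := by
    rw [hK, hK']
    ext i j
    fin_cases i <;> fin_cases j <;>
      simp [Matrix.mul_apply, Fin.sum_univ_two, Matrix.one_apply] <;>
      field_simp <;> ring
  set L : Matrix (Fin n) (Fin n) ℝ := G.lapMatrix ℝ with hL
  set A₁ : Matrix (Fin m ⊕ Fin n) (Fin m ⊕ Fin n) ℝ :=
    fromBlocks ((μ - 2) • 1) Bᵀ B ((μ - (r : ℝ) - 2) • 1 - L) with hA₁
  set B₁ : Matrix (Fin m ⊕ Fin n) (Fin n × Fin 2) ℝ :=
    fun i p => Sum.elim (fun _ => (0:ℝ)) (fun v => if v = p.1 then 1 else 0) i with hB₁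
  set C₁ : Matrix (Fin n × Fin 2) (Fin m ⊕ Fin n) ℝ :=
    fun p i => Sum.elim (fun _ => (0:ℝ)) (fun v => if p.1 = v then 1 else 0) i with hC₁
  set D₁ : Matrix (Fin n × Fin 2) (Fin n × Fin 2) ℝ := (1 : Matrix (Fin n) (Fin n) ℝ) ⊗ₖ K
    with hD₁
  set E : Matrix (Fin n × Fin 2) (Fin n × Fin 2) ℝ := (1 : Matrix (Fin n) (Fin n) ℝ) ⊗ₖ K'
    with hE
  have hDE : D₁ * E = 1 := by
    rw [hD₁, hE, ← Matrix.mul_kronecker_mul, one_mul, hKK', Matrix.one_kronecker_one]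
  haveI : Invertible D₁ := invertibleOfRightInverse _ _ hDE
  have hinvD : ⅟D₁ = E := invOf_eq_right_inv hDE
  -- step 1: reindex to block form
  have heq : (μ • (1 : Matrix (Fin m ⊕ Fin n ⊕ Fin n × Fin 2) (Fin m ⊕ Fin n ⊕ Fin n × Fin 2) ℝ)
        - LRTMatrix r B L).submatrix
        (Equiv.sumAssoc (Fin m) (Fin n) (Fin n × Fin 2))
        (Equiv.sumAssoc (Fin m) (Fin n) (Fin n × Fin 2))
      = fromBlocks A₁ B₁ C₁ D₁ := by
    ext i j
    rcases i with (a | v) | ⟨w, k⟩ <;> rcases j with (b | v') | ⟨w', k'⟩ <;>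
      [skip; skip; skip; skip; skip; skip; skip; skip; skip] <;>
      first
      | (fin_cases k <;> fin_cases k' <;>
          simp [LRTMatrix, hA₁, hB₁, hC₁, hD₁, hK, Matrix.one_apply, Prod.ext_iff,
            Matrix.kroneckerMap_apply, Matrix.fromBlocks] <;> split_ifs <;> ring)
      | (simp [LRTMatrix, hA₁, hB₁, hC₁, hD₁, hK, Matrix.one_apply, Prod.ext_iff,
            Matrix.kroneckerMap_apply, Matrix.fromBlocks] <;> split_ifs <;> ring)
  have hdet1 : (μ • (1 : Matrix (Fin m ⊕ Fin n ⊕ Fin n × Fin 2) (Fin m ⊕ Fin n ⊕ Fin n × Fin 2) ℝ)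
        - LRTMatrix r B L).det = (fromBlocks A₁ B₁ C₁ D₁).det := by
    rw [← heq, Matrix.det_submatrix_equiv_self]
  -- step 2: determinant of D₁
  have hdetD : D₁.det = (μ - 1) ^ n * (μ - 3) ^ n := by
    rw [hD₁, Matrix.det_kronecker, Matrix.det_one, one_pow, one_mul, hK,
      Matrix.det_fin_two_of, Fintype.card_fin, ← mul_pow]
    congr 1
    ring
  -- step 3: the Schur correction term
  have hX : B₁ * E * C₁ = fromBlocks 0 0 0 ((2 / (μ - 1)) • (1 : Matrix (Fin n) (Fin n) ℝ)) := by
    ext i j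
    rcases i with a | v <;> rcases j with b | v' <;>
      simp only [Matrix.mul_apply] <;>
      simp [hB₁, hC₁, hE, hK', Matrix.mul_apply, Fintype.sum_prod_type, Fin.sum_univ_two,
        Matrix.kroneckerMap_apply, Matrix.one_apply, Matrix.fromBlocks, ite_mul, mul_ite]
    split_ifs with h
    · field_simp
      ring
    · rfl
  -- step 4: combine
  rw [hdet1, Matrix.det_fromBlocks₂₂, hinvD, hdetD, hX, hA₁]
  congr 2
  ext i j
  rcases i with a | v <;> rcases j with b | v' <;>
    simp [hA₁, Matrix.fromBlocks, Matrix.sub_apply, Matrix.smul_apply, Matrix.one_apply] <;>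
    split_ifs <;> ring
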